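/- Let A_1, …, A_{m−1} be a skew Clifford system on ℝ^{n+1}, let F(x,y) = ⟨x,y⟩² + Σ_{q=1}^{m−1} ⟨A_q x, y⟩², and let a, b > 0. For x, y ∈ ℝ^{n+1} with ‖x‖ = a and ‖y‖ = b, the gradient of F tangential to S^n(a) × S^n(b), namely ∇̄F = DF − (⟨DF,(x,0)⟩/a²)(x,0) − (⟨DF,(0,y)⟩/b²)(0,y) where DF is the Euclidean gradient, satisfies ‖∇̄F‖² = 4F(a² + b²) − 4F²(1/a² + 1/b²); in particular ⟨DF,(x,0)⟩ = ⟨DF,(0,y)⟩ = 2F. -/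

import Mathlib

open Matrix
open scoped RealInnerProductSpace BigOperators

noncomputable section

/-- A skew Clifford system `A_1, …, A_{m-1}` on `ℝ^N`: skew-symmetric matrices with
`A_p A_q + A_q A_p = -2 δ_{pq} Id`. -/
def IsSkewCliffordSystem {N m : ℕ} (A : Fin (m - 1) → Matrix (Fin N) (Fin N) ℝ) : Prop :=
  (∀ p q, A p * A q + A q * A p =
      if p = q then (-2 : ℝ) • (1 : Matrix (Fin N) (Fin N) ℝ) else 0) ∧
  (∀ p, (A p)ᵀ = -A p)

/-- The action of a matrix on Euclidean space. -/
def act {N : ℕ} (A : Matrix (Fin N) (Fin N) ℝ) (x : EuclideanSpace ℝ (Fin N)) :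
    EuclideanSpace ℝ (Fin N) :=
  Matrix.toEuclideanLin A x

/-- The splitting form of the FKM isoparametric polynomial:
`F(x,y) = ⟨x,y⟩² + Σ_q ⟨A_q x, y⟩²`. -/
def FKM {N m : ℕ} (A : Fin (m - 1) → Matrix (Fin N) (Fin N) ℝ)
    (x y : EuclideanSpace ℝ (Fin N)) : ℝ :=
  ⟪x, y⟫ ^ 2 + ∑ q, ⟪act (A q) x, y⟫ ^ 2

section Helpers

variable {E : Type*} [NormedAddCommGroup E] [InnerProductSpace ℝ E]

lemma grad_inner_sq (v u : E) :
    HasFDerivAt (fun x : E => ⟪x, v⟫ ^ 2) ((2 * ⟪u, v⟫) • (innerSL ℝ v : E →L[ℝ] ℝ)) u := by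
  have h : HasFDerivAt (fun x : E => ⟪x, v⟫) (innerSL ℝ v : E →L[ℝ] ℝ) u := by
    simpa [real_inner_comm] using (innerSL ℝ v).hasFDerivAt (x := u)
  have := h.fun_mul h
  simp only [pow_two]
  refine this.congr_fderiv ?_
  ext z
  simp [real_inner_comm]
  ring

lemma key_grad {k : ℕ} (v : E) (w : Fin k → E) (u : E) [CompleteSpace E] :
    HasGradientAt (fun x : E => ⟪x, v⟫ ^ 2 + ∑ q, ⟪x, w q⟫ ^ 2)
      ((2 * ⟪u, v⟫) • v + ∑ q, (2 * ⟪u, w q⟫) • w q) u := by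
  rw [hasGradientAt_iff_hasFDerivAt]
  have hs : HasFDerivAt (fun x : E => ∑ q, ⟪x, w q⟫ ^ 2)
      (∑ q, (2 * ⟪u, w q⟫) • (innerSL ℝ (w q) : E →L[ℝ] ℝ)) u :=
    HasFDerivAt.fun_sum (fun q _ => grad_inner_sq (w q) u)
  have h := (grad_inner_sq v u).fun_add hs
  refine h.congr_fderiv ?_
  ext z
  simp [InnerProductSpace.toDual_apply_apply, inner_add_left, inner_smul_left, sum_inner,
    real_inner_comm]

lemma inner_comb {k : ℕ} (v : E) (u : Fin k → E) (α : ℝ) (c : Fin k → ℝ) (z : E)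
    (hv : ⟪v, z⟫ = α) (hu : ∀ q, ⟪u q, z⟫ = c q) :
    ⟪(2 * α) • v + ∑ q, (2 * c q) • u q, z⟫ = 2 * (α ^ 2 + ∑ q, c q ^ 2) := by
  rw [inner_add_left, sum_inner, real_inner_smul_left, hv]
  have : ∀ q : Fin k, ⟪(2 * c q) • u q, z⟫ = 2 * c q ^ 2 := fun q => by
    rw [real_inner_smul_left, hu q]; ring
  rw [Finset.sum_congr rfl fun q _ => this q, ← Finset.mul_sum]
  ring

lemma norm_sq_comb {k : ℕ} (v : E) (u : Fin k → E) (α : ℝ) (c : Fin k → ℝ) (r : ℝ)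
    (hv : ‖v‖ = r) (hvu : ∀ q, ⟪v, u q⟫ = 0)
    (huu : ∀ p q, ⟪u p, u q⟫ = if p = q then r ^ 2 else 0) :
    ‖(2 * α) • v + ∑ q, (2 * c q) • u q‖ ^ 2 = 4 * r ^ 2 * (α ^ 2 + ∑ q, c q ^ 2) := by
  have expand : ‖(2 * α) • v + ∑ q, (2 * c q) • u q‖ ^ 2
      = ⟪(2 * α) • v + ∑ q, (2 * c q) • u q, (2 * α) • v + ∑ q, (2 * c q) • u q⟫ :=
    (real_inner_self_eq_norm_sq _).symm
  rw [expand, inner_add_add_self]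
  have h1 : ⟪(2 * α) • v, (2 * α) • v⟫ = 4 * α ^ 2 * r ^ 2 := by
    rw [real_inner_smul_left, real_inner_smul_right, real_inner_self_eq_norm_sq, hv]; ring
  have h2 : ⟪(2 * α) • v, ∑ q, (2 * c q) • u q⟫ = 0 := by
    rw [inner_sum]
    refine Finset.sum_eq_zero fun q _ => ?_
    rw [real_inner_smul_left, real_inner_smul_right, hvu q]; ring
  have h3 : ⟪∑ q, (2 * c q) • u q, ∑ q, (2 * c q) • u q⟫ = 4 * r ^ 2 * ∑ q, c q ^ 2 := by
    rw [sum_inner]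
    have : ∀ p : Fin k, ⟪(2 * c p) • u p, ∑ q, (2 * c q) • u q⟫ = 4 * r ^ 2 * c p ^ 2 := by
      intro p
      rw [inner_sum]
      have : ∀ q : Fin k, ⟪(2 * c p) • u p, (2 * c q) • u q⟫
          = if q = p then 4 * r ^ 2 * c p ^ 2 else 0 := by
        intro q
        rw [real_inner_smul_left, real_inner_smul_right, huu p q]
        by_cases h : p = q
        · subst h; simp; ring
        · simp [h, Ne.symm h]
      rw [Finset.sum_congr rfl fun q _ => this q]
      simp
    rw [Finset.sum_congr rfl fun p _ => this p, ← Finset.mul_sum]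
  have h2' : ⟪∑ q, (2 * c q) • u q, (2 * α) • v⟫ = 0 := by
    rw [real_inner_comm]; exact h2
  rw [h1, h2, h2', h3]; ring

end Helpers

section ActLemmas

variable {N : ℕ}

lemma act_add (M P : Matrix (Fin N) (Fin N) ℝ) (z : EuclideanSpace ℝ (Fin N)) :
    act (M + P) z = act M z + act P z := by
  simp [act, map_add]

lemma act_neg (M : Matrix (Fin N) (Fin N) ℝ) (z : EuclideanSpace ℝ (Fin N)) :
    act (-M) z = -(act M z) := by
  simp [act, map_neg]

lemma act_mul (M P : Matrix (Fin N) (Fin N) ℝ) (z : EuclideanSpace ℝ (Fin N)) :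
    act (M * P) z = act M (act P z) := by
  simp [act, Matrix.toEuclideanLin, Matrix.toLin'_mul]

lemma act_one (z : EuclideanSpace ℝ (Fin N)) :
    act (1 : Matrix (Fin N) (Fin N) ℝ) z = z := by
  apply (WithLp.equiv 2 _).injective
  simp [act, Matrix.piLp_ofLp_toEuclideanLin, Matrix.toLin'_one]

lemma act_smul_one (r : ℝ) (z : EuclideanSpace ℝ (Fin N)) :
    act (r • (1 : Matrix (Fin N) (Fin N) ℝ)) z = r • z := by
  rw [act, _root_.map_smul, LinearMap.smul_apply]
  exact congrArg _ (act_one z)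

lemma inner_act_left (M : Matrix (Fin N) (Fin N) ℝ) (u v : EuclideanSpace ℝ (Fin N)) :
    ⟪act M u, v⟫ = ⟪u, act Mᵀ v⟫ := by
  rw [show Mᵀ = Mᴴ from (Matrix.conjTranspose_eq_transpose_of_trivial M).symm]
  rw [act, act, Matrix.toEuclideanLin_conjTranspose_eq_adjoint, LinearMap.adjoint_inner_right]

end ActLemmas

section Clifford

variable {N m : ℕ} {A : Fin (m - 1) → Matrix (Fin N) (Fin N) ℝ}

lemma skew_inner (hA : IsSkewCliffordSystem A) (q : Fin (m - 1)) (z : EuclideanSpace ℝ (Fin N)) :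
    ⟪act (A q) z, z⟫ = 0 := by
  have h : ⟪act (A q) z, z⟫ = -⟪z, act (A q) z⟫ := by
    rw [inner_act_left, hA.2, act_neg, inner_neg_right]
  rw [real_inner_comm]
  linarith [real_inner_comm (act (A q) z) z ▸ h]

lemma clif_inner (hA : IsSkewCliffordSystem A) (p q : Fin (m - 1))
    (z : EuclideanSpace ℝ (Fin N)) :
    ⟪act (A p) z, act (A q) z⟫ = if p = q then ‖z‖ ^ 2 else 0 := by
  have hadd : act (A p) (act (A q) z) + act (A q) (act (A p) z)
      = if p = q then (-2 : ℝ) • z else 0 := by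
    rw [← act_mul, ← act_mul, ← act_add, hA.1 p q]
    by_cases h : p = q
    · rw [if_pos h, if_pos h, act_smul_one]
    · rw [if_neg h, if_neg h]
      simp [act]
  have e1 : ⟪act (A p) z, act (A q) z⟫ = -⟪z, act (A p) (act (A q) z)⟫ := by
    rw [inner_act_left, hA.2, act_neg, inner_neg_right]
  have e2 : ⟪act (A q) z, act (A p) z⟫ = -⟪z, act (A q) (act (A p) z)⟫ := by
    rw [inner_act_left, hA.2, act_neg, inner_neg_right]
  have hcomm : ⟪act (A q) z, act (A p) z⟫ = ⟪act (A p) z, act (A q) z⟫ :=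
    real_inner_comm _ _
  have hsum : ⟪act (A p) z, act (A q) z⟫ + ⟪act (A q) z, act (A p) z⟫
      = -⟪z, act (A p) (act (A q) z) + act (A q) (act (A p) z)⟫ := by
    rw [inner_add_right, e1, e2]; ring
  rw [hadd] at hsum
  by_cases h : p = q
  · subst h
    rw [if_pos rfl] at hsum
    rw [if_pos rfl]
    rw [real_inner_smul_right] at hsum
    rw [real_inner_self_eq_norm_sq] at hsum ⊢
    linarith [real_inner_self_eq_norm_sq z]
  · rw [if_neg h] at hsum
    rw [if_neg h]
    rw [inner_zero_right, hcomm] at hsum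
    linarith

end Clifford

/-- for `‖x‖ = a`, `‖y‖ = b` (`a, b > 0`), the gradient of `F` tangential to
`S^n(a) × S^n(b)`, `∇̄F = DF − (⟨DF,(x,0)⟩/a²)(x,0) − (⟨DF,(0,y)⟩/b²)(0,y)`, satisfies
`‖∇̄F‖² = 4F(a² + b²) − 4F²(1/a² + 1/b²)`; in particular
`⟨DF,(x,0)⟩ = ⟨DF,(0,y)⟩ = 2F`.  Here `DF = (Gx, Gy)` is the full Euclidean gradient,
`Gx`, `Gy` being the gradients of `F` in the `x`- and `y`-variables, so that
`⟨DF,(x,0)⟩ = ⟨Gx, x⟩`, `⟨DF,(0,y)⟩ = ⟨Gy, y⟩` and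
`‖∇̄F‖² = ‖Gx − (⟨Gx,x⟩/a²) x‖² + ‖Gy − (⟨Gy,y⟩/b²) y‖²`. -/
theorem stmt4 (n m : ℕ) (hn : 1 ≤ n) (hm : 1 ≤ m)
    (A : Fin (m - 1) → Matrix (Fin (n + 1)) (Fin (n + 1)) ℝ)
    (hA : IsSkewCliffordSystem A)
    (a b : ℝ) (ha : 0 < a) (hb : 0 < b)
    (x y : EuclideanSpace ℝ (Fin (n + 1))) (hx : ‖x‖ = a) (hy : ‖y‖ = b) :
    ⟪gradient (fun x' => FKM A x' y) x, x⟫ = 2 * FKM A x y ∧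
    ⟪gradient (fun y' => FKM A x y') y, y⟫ = 2 * FKM A x y ∧
    ‖gradient (fun x' => FKM A x' y) x -
        (⟪gradient (fun x' => FKM A x' y) x, x⟫ / a ^ 2) • x‖ ^ 2 +
      ‖gradient (fun y' => FKM A x y') y -
        (⟪gradient (fun y' => FKM A x y') y, y⟫ / b ^ 2) • y‖ ^ 2 =
      4 * FKM A x y * (a ^ 2 + b ^ 2) -
        4 * (FKM A x y) ^ 2 * (1 / a ^ 2 + 1 / b ^ 2) := by
  classical
  set c : Fin (m - 1) → ℝ := fun q => ⟪act (A q) x, y⟫ with hc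
  set w : Fin (m - 1) → EuclideanSpace ℝ (Fin (n + 1)) := fun q => -(act (A q) y) with hw
  -- rewrite FKM in the two variables
  have hwq : ∀ (q) (x' : EuclideanSpace ℝ (Fin (n + 1))), ⟪act (A q) x', y⟫ = ⟪x', w q⟫ := by
    intro q x'
    rw [inner_act_left, hA.2, act_neg]
  have hFx : (fun x' => FKM A x' y) = fun x' => ⟪x', y⟫ ^ 2 + ∑ q, ⟪x', w q⟫ ^ 2 := by
    funext x'
    simp only [FKM]
    congr 1
    exact Finset.sum_congr rfl fun q _ => by rw [hwq q x']
  have hFy : (fun y' => FKM A x y') = fun y' => ⟪y', x⟫ ^ 2 + ∑ q, ⟪y', act (A q) x⟫ ^ 2 := by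
    funext y'
    simp only [FKM]
    rw [real_inner_comm]
    congr 1
    exact Finset.sum_congr rfl fun q _ => by rw [real_inner_comm]
  -- the gradients
  have hGx : gradient (fun x' => FKM A x' y) x
      = (2 * ⟪x, y⟫) • y + ∑ q, (2 * ⟪x, w q⟫) • w q := by
    rw [hFx]; exact (key_grad y w x).gradient
  have hGy : gradient (fun y' => FKM A x y') y
      = (2 * ⟪y, x⟫) • x + ∑ q, (2 * ⟪y, act (A q) x⟫) • (act (A q) x) := by
    rw [hFy]; exact (key_grad x (fun q => act (A q) x) y).gradient
  have hxw : ∀ q, ⟪x, w q⟫ = c q := fun q => (hwq q x).symm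
  have hyAx : ∀ q, ⟪y, act (A q) x⟫ = c q := fun q => real_inner_comm _ _
  have hF : FKM A x y = ⟪x, y⟫ ^ 2 + ∑ q, c q ^ 2 := rfl
  -- first statement
  have h1 : ⟪gradient (fun x' => FKM A x' y) x, x⟫ = 2 * FKM A x y := by
    rw [hGx]
    have hcomb : ⟪(2 * ⟪x, y⟫) • y + ∑ q, (2 * ⟪x, w q⟫) • w q, x⟫
        = 2 * (⟪x, y⟫ ^ 2 + ∑ q, ⟪x, w q⟫ ^ 2) :=
      inner_comb y w ⟪x, y⟫ (fun q => ⟪x, w q⟫) x (real_inner_comm x y)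
        (fun q => real_inner_comm x (w q))
    rw [hcomb, hF]
    simp only [hxw]
  have h2 : ⟪gradient (fun y' => FKM A x y') y, y⟫ = 2 * FKM A x y := by
    rw [hGy]
    have hcomb : ⟪(2 * ⟪y, x⟫) • x + ∑ q, (2 * ⟪y, act (A q) x⟫) • act (A q) x, y⟫
        = 2 * (⟪y, x⟫ ^ 2 + ∑ q, ⟪y, act (A q) x⟫ ^ 2) :=
      inner_comb x (fun q => act (A q) x) ⟪y, x⟫ (fun q => ⟪y, act (A q) x⟫) y
        (real_inner_comm y x) (fun q => real_inner_comm y (act (A q) x))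
    rw [hcomb, hF, show (⟪y, x⟫ : ℝ) = ⟪x, y⟫ from real_inner_comm x y]
    simp only [hyAx]
  refine ⟨h1, h2, ?_⟩
  -- norms of gradients
  have hclif := clif_inner hA
  have hskew := skew_inner hA
  have hnGx : ‖gradient (fun x' => FKM A x' y) x‖ ^ 2 = 4 * b ^ 2 * FKM A x y := by
    rw [hGx, hF]
    have hvu : ∀ q, ⟪y, w q⟫ = 0 := fun q => by
      rw [hw]
      simp only [inner_neg_right]
      rw [real_inner_comm, hskew q y]
      ring
    have huu : ∀ p q, ⟪w p, w q⟫ = if p = q then b ^ 2 else 0 := fun p q => by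
      simp only [hw, inner_neg_neg]
      rw [hclif p q y, hy]
    have hcomb : ‖(2 * ⟪x, y⟫) • y + ∑ q, (2 * ⟪x, w q⟫) • w q‖ ^ 2
        = 4 * b ^ 2 * (⟪x, y⟫ ^ 2 + ∑ q, ⟪x, w q⟫ ^ 2) :=
      norm_sq_comb y w ⟪x, y⟫ (fun q => ⟪x, w q⟫) b hy hvu huu
    rw [hcomb]
    simp only [hxw]
  have hnGy : ‖gradient (fun y' => FKM A x y') y‖ ^ 2 = 4 * a ^ 2 * FKM A x y := by
    rw [hGy, hF]
    have hvu : ∀ q, ⟪x, act (A q) x⟫ = 0 := fun q => by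
      rw [real_inner_comm]; exact hskew q x
    have huu : ∀ p q, ⟪act (A p) x, act (A q) x⟫ = if p = q then a ^ 2 else 0 := fun p q => by
      rw [hclif p q x, hx]
    have hcomb : ‖(2 * ⟪y, x⟫) • x + ∑ q, (2 * ⟪y, act (A q) x⟫) • act (A q) x‖ ^ 2
        = 4 * a ^ 2 * (⟪y, x⟫ ^ 2 + ∑ q, ⟪y, act (A q) x⟫ ^ 2) :=
      norm_sq_comb x (fun q => act (A q) x) ⟪y, x⟫ (fun q => ⟪y, act (A q) x⟫) a hx hvu huu
    rw [hcomb, show (⟪y, x⟫ : ℝ) = ⟪x, y⟫ from real_inner_comm x y]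
    simp only [hyAx]
  -- tangential norm computation
  set F := FKM A x y
  set Gx := gradient (fun x' => FKM A x' y) x
  set Gy := gradient (fun y' => FKM A x y') y
  have ha2 : a ^ 2 ≠ 0 := pow_ne_zero 2 ha.ne'
  have hb2 : b ^ 2 ≠ 0 := pow_ne_zero 2 hb.ne'
  have tx : ‖Gx - (⟪Gx, x⟫ / a ^ 2) • x‖ ^ 2 = 4 * F * b ^ 2 - 4 * F ^ 2 / a ^ 2 := by
    rw [norm_sub_sq_real, real_inner_smul_right, h1, norm_smul, mul_pow, hnGx, hx,
      Real.norm_eq_abs, sq_abs]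
    field_simp
    ring
  have ty : ‖Gy - (⟪Gy, y⟫ / b ^ 2) • y‖ ^ 2 = 4 * F * a ^ 2 - 4 * F ^ 2 / b ^ 2 := by
    rw [norm_sub_sq_real, real_inner_smul_right, h2, norm_smul, mul_pow, hnGy, hy,
      Real.norm_eq_abs, sq_abs]
    field_simp
    ring
  rw [tx, ty]
  field_simp
  ring
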